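/- Let γ ∈ [1/2, 1), K ≥ 0, M ≥ 0, and let b : ℝ → ℝ be twice differentiable with |b′(x)| ≤ K(1+|x|)^{−γ} and |b″(x)| ≤ M for all x ∈ ℝ. Then for all x ∈ ℝ, |b(x)·b′(x) + b″(x)/2| ≤ K · max(|b(0)| − K/(1−γ), 0) + K²/(1−γ) + M/2. -/

import Mathlib

open Real

/-- Improved bound: if `γ ∈ [1/2, 1)` and `b` is twice differentiable with
`|b′(x)| ≤ K(1+|x|)^{−γ}` and `|b″(x)| ≤ M`, then
`|b(x)b′(x) + b″(x)/2| ≤ K·max(|b(0)| − K/(1−γ), 0) + K²/(1−γ) + M/2`. -/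
theorem beta_deriv_improved_bound (γ K M : ℝ) (hγ₀ : 1 / 2 ≤ γ) (hγ₁ : γ < 1)
    (hK : 0 ≤ K) (hM : 0 ≤ M)
    (b : ℝ → ℝ) (hb : Differentiable ℝ b) (hb' : Differentiable ℝ (deriv b))
    (hbd : ∀ x : ℝ, |deriv b x| ≤ K * (1 + |x|) ^ (-γ))
    (hbd2 : ∀ x : ℝ, |deriv (deriv b) x| ≤ M) :
    ∀ x : ℝ, |b x * deriv b x + deriv (deriv b) x / 2| ≤
      K * max (|b 0| - K / (1 - γ)) 0 + K ^ 2 / (1 - γ) + M / 2 := by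
  have h1γ : (0:ℝ) < 1 - γ := by linarith
  set c := K / (1 - γ) with hc
  have hc0 : 0 ≤ c := div_nonneg hK h1γ.le
  have hcont : Continuous (deriv b) := hb'.continuous
  -- explicit integral computation for z ≥ 0
  have hint : ∀ z : ℝ, 0 ≤ z → (∫ u in (0:ℝ)..z, K * (1+u) ^ (-γ))
      = c * ((1+z) ^ (1-γ) - 1) := by
    intro z hz
    rw [intervalIntegral.integral_const_mul]
    have h1 : (∫ u in (0:ℝ)..z, (1+u) ^ (-γ)) = ∫ u in ((1:ℝ)+0)..(1+z), u ^ (-γ) :=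
      intervalIntegral.integral_comp_add_left (fun u => u ^ (-γ)) 1
    rw [h1, show (1:ℝ)+0 = 1 by norm_num, integral_rpow (Or.inl (by linarith))]
    rw [Real.one_rpow]
    have h2 : -γ + 1 = 1 - γ := by ring
    rw [h2, hc]
    ring
  -- integrability of the bound on [0, z] for z ≥ 0
  have hgint : ∀ z : ℝ, 0 ≤ z →
      IntervalIntegrable (fun t => K * (1+t) ^ (-γ)) MeasureTheory.volume 0 z := by
    intro z hz
    apply ContinuousOn.intervalIntegrable
    rw [Set.uIcc_of_le hz]
    apply ContinuousOn.mul continuousOn_const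
    apply ContinuousOn.rpow_const ((continuous_const.add continuous_id).continuousOn)
    intro t ht
    left
    have : (0:ℝ) ≤ t := ht.1
    intro h; simp only [Pi.add_apply, Pi.neg_apply, id] at h; linarith
  -- key growth bound on |b y|
  have key : ∀ y : ℝ, |b y| ≤ |b 0| + c * ((1 + |y|) ^ (1-γ) - 1) := by
    intro y
    rcases le_total 0 y with hy | hy
    · have hi : IntervalIntegrable (deriv b) MeasureTheory.volume 0 y :=
        hcont.intervalIntegrable 0 y
      have hftc : b y - b 0 = ∫ u in (0:ℝ)..y, deriv b u :=
        (intervalIntegral.integral_deriv_eq_sub (fun u _ => hb u) hi).symm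
      have hmono : (∫ u in (0:ℝ)..y, |deriv b u|)
          ≤ ∫ u in (0:ℝ)..y, K * (1+u) ^ (-γ) := by
        apply intervalIntegral.integral_mono_on hy hi.abs (hgint y hy)
        intro t ht
        have := hbd t
        rwa [abs_of_nonneg ht.1] at this
      have hn : |b y - b 0| ≤ ∫ u in (0:ℝ)..y, |deriv b u| := by
        rw [hftc]
        simpa using intervalIntegral.norm_integral_le_integral_norm (f := deriv b)
          (a := 0) (b := y) hy
      have habs : |y| = y := abs_of_nonneg hy
      rw [habs]
      have := hint y hy
      have hby : |b y| ≤ |b 0| + |b y - b 0| := by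
        calc |b y| = |b 0 + (b y - b 0)| := by ring_nf
          _ ≤ |b 0| + |b y - b 0| := abs_add_le _ _
      linarith [hn.trans hmono]
    · -- y ≤ 0
      have hy' : 0 ≤ -y := by linarith
      have hi : IntervalIntegrable (deriv b) MeasureTheory.volume y 0 :=
        hcont.intervalIntegrable y 0
      have hftc : b 0 - b y = ∫ u in y..(0:ℝ), deriv b u :=
        (intervalIntegral.integral_deriv_eq_sub (fun u _ => hb u) hi).symm
      have hmono : (∫ u in y..(0:ℝ), |deriv b u|)
          ≤ ∫ u in y..(0:ℝ), K * (1 + -u) ^ (-γ) := by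
        apply intervalIntegral.integral_mono_on hy hi.abs
        · apply ContinuousOn.intervalIntegrable
          rw [Set.uIcc_of_le hy]
          apply ContinuousOn.mul continuousOn_const
          apply ContinuousOn.rpow_const
            ((continuous_const.add continuous_id.neg).continuousOn)
          intro t ht
          left
          have : t ≤ 0 := ht.2
          intro h; simp only [Pi.add_apply, Pi.neg_apply, id] at h; linarith
        · intro t ht
          have := hbd t
          rwa [abs_of_nonpos ht.2] at this
      have hcomp : (∫ u in y..(0:ℝ), K * (1 + -u) ^ (-γ))
          = ∫ u in (0:ℝ)..(-y), K * (1+u) ^ (-γ) := by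
        have := intervalIntegral.integral_comp_neg (a := y) (b := 0)
          (fun u => K * (1+u) ^ (-γ))
        simpa using this
      have hn : |b 0 - b y| ≤ ∫ u in y..(0:ℝ), |deriv b u| := by
        rw [hftc]
        simpa using intervalIntegral.norm_integral_le_integral_norm (f := deriv b)
          (a := y) (b := 0) hy
      have habs : |y| = -y := abs_of_nonpos hy
      rw [habs]
      have := hint (-y) hy'
      have hby : |b y| ≤ |b 0| + |b 0 - b y| := by
        rw [abs_sub_comm]
        calc |b y| = |b 0 + (b y - b 0)| := by ring_nf
          _ ≤ |b 0| + |b y - b 0| := abs_add_le _ _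
      rw [hcomp, this] at hmono
      linarith [hn.trans hmono]
  -- main estimate
  intro x
  have hP1 : (1:ℝ) ≤ 1 + |x| := le_add_of_nonneg_right (abs_nonneg x)
  have hPpos : (0:ℝ) < 1 + |x| := by linarith
  set P := (1 + |x|) ^ (-γ) with hP
  set Q := (1 + |x|) ^ (1-γ) with hQ
  have hPnn : 0 ≤ P := Real.rpow_nonneg hPpos.le _
  have hPQ : P * Q = (1 + |x|) ^ (1 - 2*γ) := by
    rw [hP, hQ, ← Real.rpow_add hPpos]; ring_nf
  have hPle : P ≤ 1 := Real.rpow_le_one_of_one_le_of_nonpos hP1 (by linarith)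
  have hR : (1 + |x|) ^ (1 - 2*γ) ≤ 1 :=
    Real.rpow_le_one_of_one_le_of_nonpos hP1 (by linarith)
  have hQ1 : (1:ℝ) ≤ Q := Real.one_le_rpow hP1 h1γ.le
  have h1 : |b x * deriv b x| ≤ (|b 0| + c * (Q - 1)) * (K * P) := by
    rw [abs_mul]
    apply mul_le_mul (key x) (hbd x) (abs_nonneg _)
    have : 0 ≤ c * (Q - 1) := mul_nonneg hc0 (by linarith)
    linarith [abs_nonneg (b 0)]
  have expand : (|b 0| + c * (Q - 1)) * (K * P)
      = K * P * (|b 0| - c) + K * c * (P * Q) := by ring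
  have hterm1 : K * P * (|b 0| - c) ≤ K * max (|b 0| - c) 0 := by
    rcases le_or_gt (|b 0| - c) 0 with h | h
    · have h1' : K * P * (|b 0| - c) ≤ 0 :=
        mul_nonpos_of_nonneg_of_nonpos (mul_nonneg hK hPnn) h
      rw [max_eq_right h, mul_zero]
      exact h1'
    · rw [max_eq_left h.le]
      nlinarith [mul_nonneg (mul_nonneg hK (sub_nonneg.mpr hPle)) h.le]
  have hterm2 : K * c * (P * Q) ≤ K ^ 2 / (1-γ) := by
    rw [hPQ]
    have hKc : K * c = K^2 / (1-γ) := by rw [hc]; ring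
    nlinarith [mul_nonneg hK hc0]
  have h2 : |deriv (deriv b) x / 2| ≤ M / 2 := by
    rw [abs_div, abs_two]
    linarith [hbd2 x]
  calc |b x * deriv b x + deriv (deriv b) x / 2|
      ≤ |b x * deriv b x| + |deriv (deriv b) x / 2| := abs_add_le _ _
    _ ≤ K * max (|b 0| - K / (1 - γ)) 0 + K ^ 2 / (1 - γ) + M / 2 := by
        rw [← hc]
        linarith [h1, expand, hterm1, hterm2, h2]
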